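/- Let T > 0 and let a, b : [0,T] → ℝ be continuously differentiable functions with a(t) < b(t) for all t ∈ [0,T]. Set M = sup_{t ∈ [0,T]} (b(t) − a(t)) and L = 2·max{ sup_{t ∈ [0,T]} b'(t), sup_{t ∈ [0,T]} (−a'(t)), 0 }. Then there exists a function h : [0,T] → ℝ such that (i) a(t) − 2M ≤ h(t) ≤ b(t) + 2M for all t ∈ [0,T], and (ii) |h(t₁) − h(t₂)| ≤ L·|t₁ − t₂| for all t₁, t₂ ∈ [0,T]. -/

import Mathlib

open Set

lemma mono_aux (T : ℝ) (f f' : ℝ → ℝ)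
    (hf : ∀ t ∈ Icc (0:ℝ) T, HasDerivWithinAt f (f' t) (Icc 0 T) t)
    (hf' : ∀ t ∈ Icc (0:ℝ) T, 0 ≤ f' t) : MonotoneOn f (Icc 0 T) := by
  apply monotoneOn_of_hasDerivWithinAt_nonneg (f' := f') (convex_Icc 0 T)
    (fun t ht => (hf t ht).continuousWithinAt)
  · intro x hx
    rw [interior_Icc] at hx ⊢
    exact (hf x (Ioo_subset_Icc_self hx)).mono Ioo_subset_Icc_self
  · intro x hx
    rw [interior_Icc] at hx
    exact hf' x (Ioo_subset_Icc_self hx)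

/-- Lemma 2.3 of Chou–Wang / Lemma `lemma_2_3` in the paper.
Given `T > 0` and continuously differentiable `a, b : [0,T] → ℝ` with `a < b`,
with `M = sup (b - a)` and `L = 2 max{sup b', sup (-a'), 0}`, there exists
`h : [0,T] → ℝ` with `a - 2M ≤ h ≤ b + 2M` which is `L`-Lipschitz. -/
theorem stmt_0 (T : ℝ) (hT : 0 < T) (a b a' b' : ℝ → ℝ)
    (ha : ∀ t ∈ Icc (0 : ℝ) T, HasDerivWithinAt a (a' t) (Icc 0 T) t)
    (hb : ∀ t ∈ Icc (0 : ℝ) T, HasDerivWithinAt b (b' t) (Icc 0 T) t)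
    (ha' : ContinuousOn a' (Icc 0 T)) (hb' : ContinuousOn b' (Icc 0 T))
    (hab : ∀ t ∈ Icc (0 : ℝ) T, a t < b t)
    (M L : ℝ)
    (hM : M = sSup ((fun t => b t - a t) '' Icc 0 T))
    (hL : L = 2 * max (max (sSup (b' '' Icc 0 T)) (sSup ((fun t => -a' t) '' Icc 0 T))) 0) :
    ∃ h : ℝ → ℝ, (∀ t ∈ Icc (0 : ℝ) T, a t - 2 * M ≤ h t ∧ h t ≤ b t + 2 * M) ∧
      ∀ t₁ ∈ Icc (0 : ℝ) T, ∀ t₂ ∈ Icc (0 : ℝ) T, |h t₁ - h t₂| ≤ L * |t₁ - t₂| := by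
  have h0T : (0:ℝ) ∈ Icc (0:ℝ) T := ⟨le_refl 0, hT.le⟩
  set c : ℝ := L / 2 with hc_def
  have hL0 : 0 ≤ L := by
    rw [hL]; positivity
  have hc0 : 0 ≤ c := by positivity
  have hcL : c ≤ L := by
    rw [hc_def]; linarith
  -- bound on b'
  have hbA : BddAbove (b' '' Icc (0:ℝ) T) := (isCompact_Icc.image_of_continuousOn hb').bddAbove
  have haA : BddAbove ((fun t => -a' t) '' Icc (0:ℝ) T) :=
    (isCompact_Icc.image_of_continuousOn (ha'.neg)).bddAbove
  have hb'le : ∀ t ∈ Icc (0:ℝ) T, b' t ≤ c := by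
    intro t ht
    have h1 : b' t ≤ sSup (b' '' Icc (0:ℝ) T) := le_csSup hbA (mem_image_of_mem _ ht)
    have : sSup (b' '' Icc (0:ℝ) T) ≤ c := by
      rw [hc_def, hL]
      have := le_max_left (max (sSup (b' '' Icc (0:ℝ) T)) (sSup ((fun t => -a' t) '' Icc 0 T))) (0:ℝ)
      have := le_max_left (sSup (b' '' Icc (0:ℝ) T)) (sSup ((fun t => -a' t) '' Icc (0:ℝ) T))
      linarith
    linarith
  have ha'ge : ∀ t ∈ Icc (0:ℝ) T, -c ≤ a' t := by
    intro t ht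
    have h1 : -a' t ≤ sSup ((fun t => -a' t) '' Icc (0:ℝ) T) :=
      le_csSup haA (mem_image_of_mem _ ht)
    have : sSup ((fun t => -a' t) '' Icc (0:ℝ) T) ≤ c := by
      rw [hc_def, hL]
      have := le_max_left (max (sSup (b' '' Icc (0:ℝ) T)) (sSup ((fun t => -a' t) '' Icc 0 T))) (0:ℝ)
      have := le_max_right (sSup (b' '' Icc (0:ℝ) T)) (sSup ((fun t => -a' t) '' Icc (0:ℝ) T))
      linarith
    linarith
  -- one-sided Lipschitz bounds
  have key_b : ∀ s ∈ Icc (0:ℝ) T, ∀ t ∈ Icc (0:ℝ) T, s ≤ t → b t - b s ≤ c * (t - s) := by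
    have hmono : MonotoneOn (fun x => c * x - b x) (Icc 0 T) := by
      apply mono_aux T _ (fun x => c - b' x)
      · intro t ht
        simpa using (((hasDerivWithinAt_id t (Icc (0:ℝ) T)).const_mul c)).fun_sub (hb t ht)
      · intro t ht; have := hb'le t ht; linarith
    intro s hs t ht hst
    have := hmono hs ht hst
    simp only at this
    nlinarith
  have key_a : ∀ s ∈ Icc (0:ℝ) T, ∀ t ∈ Icc (0:ℝ) T, s ≤ t → a s - a t ≤ c * (t - s) := by
    have hmono : MonotoneOn (fun x => a x + c * x) (Icc 0 T) := by
      apply mono_aux T _ (fun x => a' x + c)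
      · intro t ht
        simpa using (ha t ht).fun_add ((hasDerivWithinAt_id t (Icc (0:ℝ) T)).const_mul c)
      · intro t ht; have := ha'ge t ht; linarith
    intro s hs t ht hst
    have := hmono hs ht hst
    simp only at this
    nlinarith
  -- the candidate function
    -- h t = inf over s in [0,T] of b s + c * |t - s|
  set F : ℝ → ℝ → ℝ := fun t s => b s + c * |t - s| with hF
  set h : ℝ → ℝ := fun t => sInf (F t '' Icc 0 T) with hh
  have hne : ∀ t : ℝ, (F t '' Icc (0:ℝ) T).Nonempty := fun t => ⟨F t 0, 0, h0T, rfl⟩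
  -- lower bound: every element is ≥ a t
  have hlow : ∀ t ∈ Icc (0:ℝ) T, ∀ y ∈ F t '' Icc (0:ℝ) T, a t ≤ y := by
    rintro t ht y ⟨s, hs, rfl⟩
    rcases le_total s t with hst | hts
    · have h1 := key_b s hs t ht hst
      have h2 := (hab t ht).le
      have : |t - s| = t - s := abs_of_nonneg (by linarith)
      simp only [hF, this]
      linarith
    · have h1 := key_a t ht s hs hts
      have h2 := (hab s hs).le
      have : |t - s| = s - t := by rw [abs_sub_comm]; exact abs_of_nonneg (by linarith)
      simp only [hF, this]
      linarith
  have hbdd : ∀ t ∈ Icc (0:ℝ) T, BddBelow (F t '' Icc (0:ℝ) T) := by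
    intro t ht; exact ⟨a t, fun y hy => hlow t ht y hy⟩
  have h_ge : ∀ t ∈ Icc (0:ℝ) T, a t ≤ h t := by
    intro t ht
    exact le_csInf (hne t) (hlow t ht)
  have h_le : ∀ t ∈ Icc (0:ℝ) T, h t ≤ b t := by
    intro t ht
    have : F t t = b t := by simp [hF]
    calc h t ≤ F t t := csInf_le (hbdd t ht) ⟨t, ht, rfl⟩
    _ = b t := this
  -- M ≥ 0
  have hM0 : 0 ≤ M := by
    have hba : ContinuousOn (fun t => b t - a t) (Icc (0:ℝ) T) := by
      have hbc : ContinuousOn b (Icc (0:ℝ) T) := fun t ht => (hb t ht).continuousWithinAt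
      have hac : ContinuousOn a (Icc (0:ℝ) T) := fun t ht => (ha t ht).continuousWithinAt
      exact hbc.sub hac
    have hbdd' : BddAbove ((fun t => b t - a t) '' Icc (0:ℝ) T) :=
      (isCompact_Icc.image_of_continuousOn hba).bddAbove
    have : b 0 - a 0 ≤ M := hM ▸ le_csSup hbdd' (mem_image_of_mem _ h0T)
    have := hab 0 h0T
    linarith
  refine ⟨h, ?_, ?_⟩
  · intro t ht
    constructor
    · have := h_ge t ht; linarith
    · have := h_le t ht; linarith
  · -- Lipschitz
    have lip : ∀ t₁ ∈ Icc (0:ℝ) T, ∀ t₂ ∈ Icc (0:ℝ) T, h t₁ - h t₂ ≤ c * |t₁ - t₂| := by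
      intro t₁ ht₁ t₂ ht₂
      have : h t₁ - c * |t₁ - t₂| ≤ h t₂ := by
        apply le_csInf (hne t₂)
        rintro y ⟨s, hs, rfl⟩
        have h1 : h t₁ ≤ F t₁ s := csInf_le (hbdd t₁ ht₁) ⟨s, hs, rfl⟩
        have h2 : |t₁ - s| ≤ |t₁ - t₂| + |t₂ - s| := abs_sub_le t₁ t₂ s
        simp only [hF] at h1 ⊢
        nlinarith
      linarith
    intro t₁ ht₁ t₂ ht₂
    have h1 := lip t₁ ht₁ t₂ ht₂
    have h2 := lip t₂ ht₂ t₁ ht₁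
    rw [abs_sub_comm t₂ t₁] at h2
    have habs : |h t₁ - h t₂| ≤ c * |t₁ - t₂| := abs_sub_le_iff.mpr ⟨h1, h2⟩
    have : c * |t₁ - t₂| ≤ L * |t₁ - t₂| :=
      mul_le_mul_of_nonneg_right hcL (abs_nonneg _)
    linarith
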